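/- If \phi: F_2[x_1,...,x_n] \to F_2[x_1,...,x_m] is a ring homomorphism preserving neural ideals, then for each j\in[m] there exists a unique i\in[n] with \phi(x_i) \in \{x_j, 1-x_j\}, and for every i\in[n], \phi(x_i) \in \{0, 1\} \cup \{x_j, 1-x_j : j\in[m]\}. -/

import Mathlib

open MvPolynomial

/-- The pseudomonomial with positive part `σ` and negative part `τ`. -/
noncomputable def pm {n : ℕ} (σ τ : Finset (Fin n)) : MvPolynomial (Fin n) (ZMod 2) :=
  (∏ i ∈ σ, X i) * ∏ j ∈ τ, (1 - X j)

/-- A polynomial is a pseudomonomial if it is `pm σ τ` for disjoint `σ τ`. -/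
def IsPseudomonomial {n : ℕ} (f : MvPolynomial (Fin n) (ZMod 2)) : Prop :=
  ∃ σ τ : Finset (Fin n), Disjoint σ τ ∧ f = pm σ τ

/-- The indicator pseudomonomial `ρ_v` of a vector `v ∈ F₂ⁿ`. -/
noncomputable def indicatorPM {n : ℕ} (v : Fin n → ZMod 2) : MvPolynomial (Fin n) (ZMod 2) :=
  pm (Finset.univ.filter fun i => v i = 1) (Finset.univ.filter fun i => ¬ v i = 1)

/-- The neural ideal of a code `C ⊆ F₂ⁿ`. -/
noncomputable def neuralIdeal {n : ℕ} (C : Set (Fin n → ZMod 2)) :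
    Ideal (MvPolynomial (Fin n) (ZMod 2)) :=
  Ideal.span (indicatorPM '' {v | v ∉ C})

/-- A ring homomorphism preserves neural ideals if the image of every neural ideal
is a neural ideal. -/
def PreservesNeuralIdeals {n m : ℕ}
    (φ : MvPolynomial (Fin n) (ZMod 2) →+* MvPolynomial (Fin m) (ZMod 2)) : Prop :=
  ∀ C : Set (Fin n → ZMod 2), ∃ D : Set (Fin m → ZMod 2),
    φ '' (neuralIdeal C : Set (MvPolynomial (Fin n) (ZMod 2))) =
      (neuralIdeal D : Set (MvPolynomial (Fin m) (ZMod 2)))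

/-- The bit flip homomorphism `δ_i`. -/
noncomputable def bitFlip {n : ℕ} (i : Fin n) :
    MvPolynomial (Fin n) (ZMod 2) →ₐ[ZMod 2] MvPolynomial (Fin n) (ZMod 2) :=
  aeval (fun j => if j = i then 1 - X j else X j)

/-- The restriction map `ω_{m,m'} : F₂[x₁,…,xₙ] → F₂[x₁,…,x_m]`. -/
noncomputable def restrictionMap (n m m' : ℕ) :
    MvPolynomial (Fin n) (ZMod 2) →ₐ[ZMod 2] MvPolynomial (Fin m) (ZMod 2) :=
  aeval (fun i : Fin n => if h : (i : ℕ) < m then X (⟨i, h⟩ : Fin m)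
    else if (i : ℕ) < m' then 0 else 1)

-- helpers
lemma zmod2_cases : ∀ a : ZMod 2, a = 0 ∨ a = 1 := by decide

lemma pm_empty_empty {n : ℕ} : pm (∅ : Finset (Fin n)) ∅ = 1 := by simp [pm]

lemma pm_insert_left {n : ℕ} {σ τ : Finset (Fin n)} {i : Fin n} (hi : i ∉ σ) :
    pm (insert i σ) τ = X i * pm σ τ := by
  simp [pm, Finset.prod_insert hi, mul_assoc]

lemma pm_insert_right {n : ℕ} {σ τ : Finset (Fin n)} {j : Fin n} (hj : j ∉ τ) :
    pm σ (insert j τ) = (1 - X j) * pm σ τ := by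
  simp only [pm, Finset.prod_insert hj]; ring

lemma pm_singleton_left {n : ℕ} (i : Fin n) : pm {i} (∅ : Finset (Fin n)) = X i := by
  simp [pm]

lemma pm_singleton_right {n : ℕ} (j : Fin n) : pm (∅ : Finset (Fin n)) {j} = 1 - X j := by
  simp [pm]

lemma eval_pm {n : ℕ} (σ τ : Finset (Fin n)) (v : Fin n → ZMod 2) :
    eval v (pm σ τ) =
      if (∀ i ∈ σ, v i = 1) ∧ (∀ j ∈ τ, v j = 0) then 1 else 0 := by
  simp only [pm, map_mul, map_prod, eval_X, map_sub, map_one]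
  split
  · rename_i hc
    have e1 : ∏ i ∈ σ, v i = 1 := Finset.prod_eq_one (fun i hi => hc.1 i hi)
    have e2 : ∏ j ∈ τ, (1 - v j) = 1 :=
      Finset.prod_eq_one (fun j hj => by rw [hc.2 j hj, sub_zero])
    rw [e1, e2, mul_one]
  · rename_i hc
    push_neg at hc
    by_cases h1 : ∀ i ∈ σ, v i = 1
    · obtain ⟨j, hj, hne⟩ := hc h1
      have : (1 : ZMod 2) - v j = 0 := by
        rcases zmod2_cases (v j) with h | h
        · exact absurd h hne
        · rw [h]; decide
      rw [Finset.prod_eq_zero hj this, mul_zero]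
    · push_neg at h1
      obtain ⟨i, hi, hne⟩ := h1
      rw [Finset.prod_eq_zero hi ((zmod2_cases (v i)).resolve_right hne), zero_mul]

def basept {n : ℕ} (σ : Finset (Fin n)) : Fin n → ZMod 2 := fun k => if k ∈ σ then 1 else 0

lemma eval_pm_basept {n : ℕ} {σ τ : Finset (Fin n)} (hd : Disjoint σ τ) :
    eval (basept σ) (pm σ τ) = 1 := by
  rw [eval_pm, if_pos]
  constructor
  · intro i hi; simp [basept, hi]
  · intro j hj; simp [basept, Finset.disjoint_right.1 hd hj]

lemma pm_ne_zero {n : ℕ} {σ τ : Finset (Fin n)} (hd : Disjoint σ τ) : pm σ τ ≠ 0 := by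
  intro h
  have := eval_pm_basept hd
  rw [h, map_zero] at this
  exact absurd this (by decide)

lemma indicatorPM_eq_prod {n : ℕ} (v : Fin n → ZMod 2) :
    indicatorPM v = ∏ k : Fin n, (if v k = 1 then X k else 1 - X k) := by
  rw [indicatorPM, pm]
  rw [← Finset.prod_filter_mul_prod_filter_not Finset.univ (fun k => v k = 1)]
  congr 1
  · exact Finset.prod_congr rfl (fun k hk => by rw [if_pos (Finset.mem_filter.1 hk).2])
  · exact Finset.prod_congr rfl (fun k hk => by rw [if_neg (Finset.mem_filter.1 hk).2])

lemma pm_dvd_indicatorPM {n : ℕ} {σ τ : Finset (Fin n)} (hd : Disjoint σ τ)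
    {v : Fin n → ZMod 2} (h1 : ∀ i ∈ σ, v i = 1) (h2 : ∀ j ∈ τ, v j = 0) :
    pm σ τ ∣ indicatorPM v := by
  rw [indicatorPM_eq_prod]
  have hpm : pm σ τ = ∏ k ∈ σ ∪ τ, (if v k = 1 then X k else 1 - X k) := by
    rw [pm, Finset.prod_union hd]
    congr 1
    · exact (Finset.prod_congr rfl (fun i hi => by rw [if_pos (h1 i hi)])).symm
    · refine (Finset.prod_congr rfl (fun j hj => ?_)).symm
      rw [if_neg (by rw [h2 j hj]; decide)]
  rw [hpm]
  exact Finset.prod_dvd_prod_of_subset _ _ _ (Finset.subset_univ _)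

def SF {n : ℕ} (σ τ : Finset (Fin n)) : Finset (Fin n → ZMod 2) :=
  Finset.univ.filter (fun v => (∀ i ∈ σ, v i = 1) ∧ (∀ j ∈ τ, v j = 0))

lemma mem_SF {n : ℕ} {σ τ : Finset (Fin n)} {v : Fin n → ZMod 2} :
    v ∈ SF σ τ ↔ (∀ i ∈ σ, v i = 1) ∧ (∀ j ∈ τ, v j = 0) := by
  simp [SF]

lemma sum_indicatorPM {n : ℕ} : ∀ (k : ℕ) (σ τ : Finset (Fin n)), ((σ ∪ τ)ᶜ).card = k →
    Disjoint σ τ → ∑ v ∈ SF σ τ, indicatorPM v = pm σ τ := by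
  intro k
  induction k using Nat.strong_induction_on with
  | _ k ih =>
    intro σ τ hk hd
    rcases Finset.eq_empty_or_nonempty ((σ ∪ τ)ᶜ) with he | ⟨a, ha⟩
    · have huniv : σ ∪ τ = Finset.univ := by
        rwa [← Finset.compl_eq_empty_iff]
      have hSF : SF σ τ = {basept σ} := by
        ext v
        rw [mem_SF, Finset.mem_singleton]
        constructor
        · rintro ⟨h1, h2⟩
          funext x
          have hx : x ∈ σ ∪ τ := huniv ▸ Finset.mem_univ x
          rcases Finset.mem_union.1 hx with hx | hx
          · rw [h1 x hx, basept, if_pos hx]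
          · rw [h2 x hx, basept, if_neg (Finset.disjoint_right.1 hd hx)]
        · rintro rfl
          exact ⟨fun i hi => by simp [basept, hi],
            fun j hj => by simp [basept, Finset.disjoint_right.1 hd hj]⟩
      rw [hSF, Finset.sum_singleton, indicatorPM]
      congr 1
      · ext x
        simp only [Finset.mem_filter, Finset.mem_univ, true_and]; simp only [basept]
        constructor
        · intro hx
          by_contra hxs
          rw [if_neg hxs] at hx
          exact absurd hx (by decide)
        · intro hx; rw [if_pos hx]
      · ext x
        simp only [Finset.mem_filter, Finset.mem_univ, true_and]; simp only [basept]
        constructor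
        · intro hx
          have hxσ : x ∉ σ := fun hs => hx (by rw [if_pos hs])
          have : x ∈ σ ∪ τ := huniv ▸ Finset.mem_univ x
          exact (Finset.mem_union.1 this).resolve_left hxσ
        · intro hx
          rw [if_neg (Finset.disjoint_right.1 hd hx)]
          decide
    · rw [Finset.mem_compl, Finset.mem_union] at ha
      push_neg at ha
      obtain ⟨haσ, haτ⟩ := ha
      have hsplit1 : SF (insert a σ) τ = (SF σ τ).filter (fun v => v a = 1) := by
        ext v
        simp only [mem_SF, Finset.mem_filter, Finset.forall_mem_insert]
        tauto
      have hsplit2 : SF σ (insert a τ) = (SF σ τ).filter (fun v => ¬ v a = 1) := by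
        ext v
        simp only [mem_SF, Finset.mem_filter, Finset.forall_mem_insert]
        constructor
        · rintro ⟨h1, h2, h3⟩
          exact ⟨⟨h1, h3⟩, by rw [h2]; decide⟩
        · rintro ⟨⟨h1, h3⟩, h2⟩
          exact ⟨h1, (zmod2_cases (v a)).resolve_right h2, h3⟩
      have hamem : a ∈ (σ ∪ τ)ᶜ := by
        rw [Finset.mem_compl, Finset.mem_union]; tauto
      have hkpos : 0 < k := hk ▸ Finset.card_pos.2 ⟨a, hamem⟩
      have hcard1 : ((insert a σ ∪ τ)ᶜ).card = k - 1 := by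
        rw [Finset.insert_union, Finset.compl_insert, Finset.card_erase_of_mem hamem, hk]
      have hcard2 : ((σ ∪ insert a τ)ᶜ).card = k - 1 := by
        rw [Finset.union_insert, Finset.compl_insert, Finset.card_erase_of_mem hamem, hk]
      have ih1 := ih (k - 1) (by omega) (insert a σ) τ hcard1
        (Finset.disjoint_insert_left.2 ⟨haτ, hd⟩)
      have ih2 := ih (k - 1) (by omega) σ (insert a τ) hcard2
        (Finset.disjoint_insert_right.2 ⟨haσ, hd⟩)
      rw [hsplit1] at ih1
      rw [hsplit2] at ih2
      rw [← Finset.sum_filter_add_sum_filter_not (SF σ τ) (fun v => v a = 1), ih1, ih2,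
        pm_insert_left haσ, pm_insert_right haτ]
      ring

lemma neuralIdeal_compl_eq_span {n : ℕ} (σ τ : Finset (Fin n)) (hd : Disjoint σ τ) :
    neuralIdeal {v : Fin n → ZMod 2 | ¬ ((∀ i ∈ σ, v i = 1) ∧ (∀ j ∈ τ, v j = 0))} =
      Ideal.span {pm σ τ} := by
  apply le_antisymm
  · rw [neuralIdeal, Ideal.span_le]
    rintro f ⟨v, hv, rfl⟩
    simp only [Set.mem_setOf_eq, not_not] at hv
    exact Ideal.mem_span_singleton.2 (pm_dvd_indicatorPM hd hv.1 hv.2)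
  · rw [Ideal.span_le, Set.singleton_subset_iff]
    rw [← sum_indicatorPM (((σ ∪ τ)ᶜ).card) σ τ rfl hd]
    refine Ideal.sum_mem _ (fun v hv => Ideal.subset_span ⟨v, ?_, rfl⟩)
    simp only [Set.mem_setOf_eq, not_not]
    exact mem_SF.1 hv

lemma surj_of_preserves {n m : ℕ}
    (φ : MvPolynomial (Fin n) (ZMod 2) →+* MvPolynomial (Fin m) (ZMod 2))
    (h : PreservesNeuralIdeals φ) : Function.Surjective φ := by
  obtain ⟨D, hD⟩ := h ∅
  have htop : neuralIdeal (∅ : Set (Fin n → ZMod 2)) = ⊤ := by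
    have h1 := neuralIdeal_compl_eq_span (∅ : Finset (Fin n)) ∅ (by simp)
    have h2 : {v : Fin n → ZMod 2 |
        ¬ ((∀ i ∈ (∅ : Finset (Fin n)), v i = 1) ∧ (∀ j ∈ (∅ : Finset (Fin n)), v j = 0))} =
        (∅ : Set (Fin n → ZMod 2)) := by
      ext v; simp
    rw [h2] at h1
    rw [h1, pm_empty_empty, Ideal.span_singleton_one]
  rw [htop] at hD
  have h1mem : (1 : MvPolynomial (Fin m) (ZMod 2)) ∈
      φ '' ((⊤ : Ideal (MvPolynomial (Fin n) (ZMod 2))) :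
      Set (MvPolynomial (Fin n) (ZMod 2))) := ⟨1, by simp, map_one φ⟩
  rw [hD] at h1mem
  have hDtop : neuralIdeal D = ⊤ := (Ideal.eq_top_iff_one _).2 h1mem
  rw [hDtop] at hD
  intro y
  have : y ∈ φ '' ((⊤ : Ideal (MvPolynomial (Fin n) (ZMod 2))) :
      Set (MvPolynomial (Fin n) (ZMod 2))) := by
    rw [hD]; simp
  obtain ⟨x, _, hx⟩ := this
  exact ⟨x, hx⟩

lemma prime_X_fin {m : ℕ} (i : Fin m) : Prime (X i : MvPolynomial (Fin m) (ZMod 2)) := by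
  obtain ⟨k, rfl⟩ : ∃ k, m = k + 1 := ⟨m - 1, by have := i.pos; omega⟩
  let e := (renameEquiv (ZMod 2) (Equiv.swap i 0)).trans (finSuccEquiv (ZMod 2) k)
  rw [← MulEquiv.prime_iff e]
  have he : e (X i) = Polynomial.X := by
    simp [e, Equiv.swap_apply_left, finSuccEquiv_X_zero]
  show Prime (e (X i))
  rw [he]
  exact Polynomial.prime_X

lemma prime_one_sub_X {m : ℕ} (j : Fin m) :
    Prime ((1 : MvPolynomial (Fin m) (ZMod 2)) - X j) := by
  have hinv : (bitFlip j).comp (bitFlip j) = AlgHom.id (ZMod 2) _ := by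
    apply MvPolynomial.algHom_ext
    intro k
    by_cases hk : k = j <;> simp [bitFlip, hk, sub_sub_cancel]
  let e := AlgEquiv.ofAlgHom (bitFlip j) (bitFlip j) hinv hinv
  have he : e (X j) = 1 - X j := by simp [e, bitFlip]
  rw [← he]
  have := (MulEquiv.prime_iff (p := X j) e).2 (prime_X_fin j)
  exact this

lemma eq_one_of_isUnit : ∀ {m : ℕ} (f : MvPolynomial (Fin m) (ZMod 2)), IsUnit f → f = 1 := by
  intro m
  induction m with
  | zero =>
    intro f hf
    let e := MvPolynomial.isEmptyAlgEquiv (ZMod 2) (Fin 0)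
    have hu : IsUnit (e f) := hf.map e
    have h2 : e f = 1 := by
      rcases zmod2_cases (e f) with h | h
      · rw [h] at hu; exact absurd hu (by decide)
      · exact h
    have := congrArg e.symm h2
    simpa using this
  | succ k ih =>
    intro f hf
    let e := finSuccEquiv (ZMod 2) k
    have hu : IsUnit (e f) := hf.map e
    rcases Polynomial.isUnit_iff.1 hu with ⟨r, hr, hCr⟩
    have hr1 : r = 1 := ih r hr
    have hef : e f = 1 := by rw [← hCr, hr1, Polynomial.C_1]
    apply e.injective
    rw [hef, map_one]

lemma dvd_pm_empty {m : ℕ} : ∀ (τ : Finset (Fin m)) (f : MvPolynomial (Fin m) (ZMod 2)),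
    f ∣ pm ∅ τ → ∃ σ' τ', σ' ⊆ (∅ : Finset (Fin m)) ∧ τ' ⊆ τ ∧ Disjoint σ' τ' ∧ f = pm σ' τ' := by
  intro τ
  induction τ using Finset.induction_on with
  | empty =>
    intro f hf
    rw [pm_empty_empty] at hf
    exact ⟨∅, ∅, le_rfl, le_rfl, Finset.disjoint_empty_left _,
      (eq_one_of_isUnit f (isUnit_of_dvd_one hf)).trans pm_empty_empty.symm⟩
  | @insert j τ hjτ ihτ =>
    intro f hf
    rw [pm_insert_right hjτ] at hf
    rcases (prime_one_sub_X j).left_dvd_or_dvd_right_of_dvd_mul hf with hpf | hfr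
    · obtain ⟨f', rfl⟩ := hpf
      have hf' : f' ∣ pm ∅ τ :=
        (mul_dvd_mul_iff_left (prime_one_sub_X j).ne_zero).1 hf
      obtain ⟨σ', τ', hσ', hτ', hdis, rfl⟩ := ihτ f' hf'
      have hσe : σ' = ∅ := Finset.subset_empty.1 hσ'
      have hjτ' : j ∉ τ' := fun hmem => hjτ (hτ' hmem)
      refine ⟨σ', insert j τ', hσ', Finset.insert_subset_insert j hτ', ?_, ?_⟩
      · subst hσe; exact Finset.disjoint_empty_left _
      · rw [pm_insert_right hjτ']
    · obtain ⟨σ', τ', hσ', hτ', hdis, rfl⟩ := ihτ f hfr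
      exact ⟨σ', τ', hσ', hτ'.trans (Finset.subset_insert j τ), hdis, rfl⟩

lemma dvd_pm_structure {m : ℕ} : ∀ (σ τ : Finset (Fin m)), Disjoint σ τ →
    ∀ (f : MvPolynomial (Fin m) (ZMod 2)), f ∣ pm σ τ →
    ∃ σ' τ', σ' ⊆ σ ∧ τ' ⊆ τ ∧ Disjoint σ' τ' ∧ f = pm σ' τ' := by
  intro σ
  induction σ using Finset.induction_on with
  | empty =>
    intro τ _ f hf
    exact dvd_pm_empty τ f hf
  | @insert i σ hiσ ihσ =>
    intro τ hd f hf
    have hdσ : Disjoint σ τ := Finset.disjoint_insert_left.1 hd |>.2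
    have hiτ : i ∉ τ := Finset.disjoint_insert_left.1 hd |>.1
    rw [pm_insert_left hiσ] at hf
    rcases (prime_X_fin i).left_dvd_or_dvd_right_of_dvd_mul hf with hpf | hfr
    · obtain ⟨f', rfl⟩ := hpf
      have hf' : f' ∣ pm σ τ :=
        (mul_dvd_mul_iff_left (prime_X_fin i).ne_zero).1 hf
      obtain ⟨σ', τ', hσ', hτ', hdis, rfl⟩ := ihσ τ hdσ f' hf'
      have hiσ' : i ∉ σ' := fun hmem => hiσ (hσ' hmem)
      have hiτ' : i ∉ τ' := fun hmem => hiτ (hτ' hmem)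
      refine ⟨insert i σ', τ', Finset.insert_subset_insert i hσ', hτ', ?_, ?_⟩
      · exact Finset.disjoint_insert_left.2 ⟨hiτ', hdis⟩
      · rw [pm_insert_left hiσ']
    · obtain ⟨σ', τ', hσ', hτ', hdis, rfl⟩ := ihσ τ hdσ f hfr
      exact ⟨σ', τ', hσ'.trans (Finset.subset_insert i σ), hτ', hdis, rfl⟩

lemma span_singleton_eq_neural {m : ℕ} (f : MvPolynomial (Fin m) (ZMod 2))
    (D : Set (Fin m → ZMod 2)) (hf : Ideal.span {f} = neuralIdeal D) :
    f = 0 ∨ IsPseudomonomial f := by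
  by_cases hD : {v : Fin m → ZMod 2 | v ∉ D} = ∅
  · left
    rw [neuralIdeal, hD, Set.image_empty, Ideal.span_empty] at hf
    have hmem := Ideal.mem_span_singleton_self f
    rw [hf] at hmem
    simpa using hmem
  · right
    obtain ⟨w, hw⟩ := Set.nonempty_iff_ne_empty.2 hD
    have hmem : indicatorPM w ∈ Ideal.span {f} :=
      hf ▸ Ideal.subset_span ⟨w, hw, rfl⟩
    have hdvd : f ∣ indicatorPM w := Ideal.mem_span_singleton.1 hmem
    rw [indicatorPM] at hdvd
    obtain ⟨σ', τ', _, _, hdis, rfl⟩ := dvd_pm_structure _ _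
      (Finset.disjoint_filter_filter_not Finset.univ Finset.univ (fun i => w i = 1)) f hdvd
    exact ⟨σ', τ', hdis, rfl⟩

lemma key_pm_image {n m : ℕ}
    (φ : MvPolynomial (Fin n) (ZMod 2) →+* MvPolynomial (Fin m) (ZMod 2))
    (h : PreservesNeuralIdeals φ) (hsurj : Function.Surjective φ)
    (σ τ : Finset (Fin n)) (hd : Disjoint σ τ) :
    φ (pm σ τ) = 0 ∨ IsPseudomonomial (φ (pm σ τ)) := by
  obtain ⟨D, hD⟩ := h {v | ¬ ((∀ i ∈ σ, v i = 1) ∧ (∀ j ∈ τ, v j = 0))}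
  rw [neuralIdeal_compl_eq_span σ τ hd] at hD
  have himg : φ '' ((Ideal.span {pm σ τ} : Ideal _) : Set _) =
      ((Ideal.span {φ (pm σ τ)} : Ideal _) : Set _) := by
    ext x
    constructor
    · rintro ⟨y, hy, rfl⟩
      rcases Ideal.mem_span_singleton.1 hy with ⟨c, rfl⟩
      exact Ideal.mem_span_singleton.2 ⟨φ c, map_mul φ _ _⟩
    · intro hx
      rcases Ideal.mem_span_singleton.1 hx with ⟨c, rfl⟩
      rcases hsurj c with ⟨c', rfl⟩
      exact ⟨pm σ τ * c', Ideal.mem_span_singleton.2 ⟨c', rfl⟩, map_mul φ _ _⟩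
  rw [himg] at hD
  exact span_singleton_eq_neural _ D (SetLike.coe_injective hD)

lemma pm_add_pm_eq_one {m : ℕ} {σ τ σ' τ' : Finset (Fin m)}
    (hd : Disjoint σ τ) (hd' : Disjoint σ' τ')
    (hsum : pm σ τ + pm σ' τ' = 1) :
    ∃ j, pm σ τ = X j ∨ pm σ τ = 1 - X j := by
  set P : (Fin m → ZMod 2) → Prop := fun v => (∀ i ∈ σ, v i = 1) ∧ (∀ j ∈ τ, v j = 0) with hP
  set Q : (Fin m → ZMod 2) → Prop := fun v => (∀ i ∈ σ', v i = 1) ∧ (∀ j ∈ τ', v j = 0) with hQ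
  have key : ∀ v, Q v ↔ ¬ P v := by
    intro v
    have := congrArg (eval v) hsum
    rw [map_add, map_one, eval_pm, eval_pm] at this
    by_cases hp : P v <;> by_cases hq : Q v
    · rw [if_pos hp, if_pos hq] at this
      exact absurd this (by decide)
    · tauto
    · tauto
    · rw [if_neg hp, if_neg hq] at this
      exact absurd this (by decide)
  rcases Nat.lt_or_ge (σ ∪ τ).card 2 with h2 | h2
  · interval_cases hcard : (σ ∪ τ).card
    · -- card 0 : contradiction
      exfalso
      have huniv : σ = ∅ ∧ τ = ∅ := by
        rw [Finset.card_eq_zero, Finset.union_eq_empty] at hcard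
        exact hcard
      have hough : Q (basept σ') := ⟨fun i hi => by simp [basept, hi],
        fun j hj => by simp [basept, Finset.disjoint_right.1 hd' hj]⟩
      rw [key] at hough
      exact hough (by simp [hP, huniv.1, huniv.2])
    · -- card 1
      obtain ⟨a, ha⟩ := Finset.card_eq_one.1 hcard
      have hσ : σ ⊆ {a} := ha ▸ Finset.subset_union_left
      have hτ : τ ⊆ {a} := ha ▸ Finset.subset_union_right
      rcases Finset.subset_singleton_iff.1 hσ with hσe | hσa
      · rcases Finset.subset_singleton_iff.1 hτ with hτe | hτa
        · exfalso
          rw [hσe, hτe, Finset.empty_union] at ha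
          exact Finset.singleton_ne_empty a ha.symm
        · exact ⟨a, Or.inr (by rw [hσe, hτa, pm_singleton_right])⟩
      · rcases Finset.subset_singleton_iff.1 hτ with hτe | hτa
        · exact ⟨a, Or.inl (by rw [hσa, hτe, pm_singleton_left])⟩
        · exfalso
          rw [hσa, hτa] at hd
          simp at hd
  · exfalso
    obtain ⟨a, ha, b, hb, hab⟩ := Finset.one_lt_card.1 h2
    set w0 : Fin m → ZMod 2 := basept σ with hw0
    have hPw0 : P w0 := ⟨fun i hi => by simp [hw0, basept, hi],
      fun j hj => by simp [hw0, basept, Finset.disjoint_right.1 hd hj]⟩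
    -- flipping a coordinate in σ ∪ τ destroys P
    have hflip : ∀ (c : Fin m), c ∈ σ ∪ τ →
        ¬ P (Function.update w0 c (w0 c + 1)) := by
      intro c hc
      rcases Finset.mem_union.1 hc with hcσ | hcτ
      · rintro ⟨h1, -⟩
        have := h1 c hcσ
        rw [Function.update_self] at this
        have hv : w0 c = 1 := by simp [hw0, basept, hcσ]
        rw [hv] at this
        exact absurd this (by decide)
      · rintro ⟨-, h2⟩
        have := h2 c hcτ
        rw [Function.update_self] at this
        have hv : w0 c = 0 := by simp [hw0, basept, Finset.disjoint_right.1 hd hcτ]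
        rw [hv] at this
        exact absurd this (by decide)
    clear hflip
    have hPchar : ∀ w : Fin m → ZMod 2, P w → ∀ c ∈ σ ∪ τ, w c = w0 c := by
      intro w hw c hc
      rcases Finset.mem_union.1 hc with hcσ | hcτ
      · rw [hw.1 c hcσ]; simp [hw0, basept, hcσ]
      · rw [hw.2 c hcτ]; simp [hw0, basept, Finset.disjoint_right.1 hd hcτ]
    have zadd : ∀ x : ZMod 2, x + 1 ≠ x := by decide
    set w1 : Fin m → ZMod 2 := Function.update w0 a (w0 a + 1) with hw1
    set w2 : Fin m → ZMod 2 := Function.update w0 b (w0 b + 1) with hw2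
    have hQ1 : Q w1 := (key w1).2 (fun hp => zadd (w0 a) (by
      have := hPchar w1 hp a ha
      rwa [hw1, Function.update_self] at this))
    have hQ2 : Q w2 := (key w2).2 (fun hp => zadd (w0 b) (by
      have := hPchar w2 hp b hb
      rwa [hw2, Function.update_self] at this))
    have hQ0 : Q w0 := by
      constructor
      · intro i hi
        by_cases hia : i = a
        · subst hia
          have := hQ2.1 i hi
          rwa [hw2, Function.update_of_ne hab] at this
        · have := hQ1.1 i hi
          rwa [hw1, Function.update_of_ne hia] at this
      · intro j hj
        by_cases hja : j = a
        · subst hja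
          have := hQ2.2 j hj
          rwa [hw2, Function.update_of_ne hab] at this
        · have := hQ1.2 j hj
          rwa [hw1, Function.update_of_ne hja] at this
    exact ((key w0).1 hQ0) hPw0

lemma not_pm_X_mul_one_sub_X {m : ℕ} (j : Fin m) :
    ¬ IsPseudomonomial ((X j : MvPolynomial (Fin m) (ZMod 2)) * (1 - X j)) := by
  rintro ⟨σ, τ, hd, heq⟩
  have := congrArg (eval (basept σ)) heq
  rw [eval_pm_basept hd, map_mul, map_sub, map_one, eval_X] at this
  have hz : ∀ x : ZMod 2, x * (1 - x) = 0 := by decide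
  rw [hz] at this
  exact absurd this (by decide)

lemma X_mul_one_sub_X_ne_zero {m : ℕ} (j : Fin m) :
    (X j : MvPolynomial (Fin m) (ZMod 2)) * (1 - X j) ≠ 0 :=
  mul_ne_zero (X_ne_zero j) (prime_one_sub_X j).ne_zero

lemma pm_pair_left {m : ℕ} {i1 i2 : Fin m} (h : i1 ≠ i2) :
    pm {i1, i2} (∅ : Finset (Fin m)) = X i1 * X i2 := by
  simp [pm, Finset.prod_pair h]

lemma pm_sing_sing {m : ℕ} (i1 i2 : Fin m) :
    pm ({i1} : Finset (Fin m)) {i2} = X i1 * (1 - X i2) := by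
  simp [pm]


theorem variables_under_preserving {n m : ℕ}
    (φ : MvPolynomial (Fin n) (ZMod 2) →+* MvPolynomial (Fin m) (ZMod 2))
    (h : PreservesNeuralIdeals φ) :
    (∀ j : Fin m, ∃! i : Fin n, φ (X i) = X j ∨ φ (X i) = 1 - X j) ∧
      ∀ i : Fin n, φ (X i) = 0 ∨ φ (X i) = 1 ∨
        ∃ j : Fin m, φ (X i) = X j ∨ φ (X i) = 1 - X j := by
  have hsurj := surj_of_preserves φ h
  have key := key_pm_image φ h hsurj
  have part2 : ∀ i : Fin n, φ (X i) = 0 ∨ φ (X i) = 1 ∨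
      ∃ j : Fin m, φ (X i) = X j ∨ φ (X i) = 1 - X j := by
    intro i
    have h1 := key {i} ∅ (by simp)
    have h2 := key ∅ {i} (by simp)
    rw [pm_singleton_left] at h1
    rw [pm_singleton_right, map_sub, map_one] at h2
    rcases h1 with h1 | ⟨σ, τ, hdστ, hpσ⟩
    · exact Or.inl h1
    rcases h2 with h2 | ⟨σ', τ', hd', hq⟩
    · exact Or.inr (Or.inl (sub_eq_zero.1 h2).symm)
    · right; right
      have hsum : pm σ τ + pm σ' τ' = 1 := by rw [← hpσ, ← hq]; ring
      obtain ⟨j, hj⟩ := pm_add_pm_eq_one hdστ hd' hsum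
      exact ⟨j, by rw [hpσ]; exact hj⟩
  refine ⟨fun j => ?_, part2⟩
  have hex : ∃ i : Fin n, φ (X i) = X j ∨ φ (X i) = 1 - X j := by
    by_contra hno
    push_neg at hno
    set s : MvPolynomial (Fin m) (ZMod 2) →ₐ[ZMod 2] MvPolynomial (Fin m) (ZMod 2) :=
      aeval (fun k : Fin m => if k = j then 0 else X k) with hs
    have hfix : ∀ i : Fin n, s (φ (X i)) = φ (X i) := by
      intro i
      rcases part2 i with h0 | h1 | ⟨k, hk | hk⟩
      · rw [h0, map_zero]
      · rw [h1, map_one]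
      · have hkj : k ≠ j := by rintro rfl; exact (hno i).1 hk
        rw [hk]; simp [hs, hkj]
      · have hkj : k ≠ j := by rintro rfl; exact (hno i).2 hk
        rw [hk]; simp [hs, hkj]
    have hcomp : (s.toRingHom.comp φ) = φ := by
      apply MvPolynomial.ringHom_ext
      · intro a
        rcases zmod2_cases a with rfl | rfl
        · simp
        · simp
      · intro i
        simpa using hfix i
    obtain ⟨g, hg⟩ := hsurj (X j)
    have hcg := RingHom.congr_fun hcomp g
    simp only [RingHom.coe_comp, Function.comp_apply] at hcg
    rw [hg] at hcg
    have hsXj : s (X j) = 0 := by simp [hs]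
    rw [show s.toRingHom (X j) = s (X j) from rfl, hsXj] at hcg
    exact X_ne_zero j hcg.symm
  obtain ⟨i0, hi0⟩ := hex
  refine ⟨i0, hi0, ?_⟩
  intro i hi
  by_contra hne
  have hbad : ∃ (σ τ : Finset (Fin n)), Disjoint σ τ ∧
      (φ (pm σ τ) = X j * (1 - X j)) := by
    rcases hi with hi | hi <;> rcases hi0 with hi0 | hi0
    · exact ⟨{i}, {i0}, Finset.disjoint_singleton.2 hne, by
        rw [pm_sing_sing, map_mul, map_sub, map_one, hi, hi0]⟩
    · refine ⟨{i, i0}, ∅, by simp, ?_⟩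
      rw [pm_pair_left hne, map_mul, hi, hi0]
    · refine ⟨{i0, i}, ∅, by simp, ?_⟩
      rw [pm_pair_left (Ne.symm hne), map_mul, hi, hi0]
    · refine ⟨{i}, {i0}, Finset.disjoint_singleton.2 hne, ?_⟩
      rw [pm_sing_sing, map_mul, map_sub, map_one, hi, hi0]
      ring
  obtain ⟨σ, τ, hdis, heq⟩ := hbad
  rcases key σ τ hdis with h0 | hpm
  · rw [heq] at h0; exact X_mul_one_sub_X_ne_zero j h0
  · rw [heq] at hpm; exact not_pm_X_mul_one_sub_X j hpm
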